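/- In ℝ³, define f₁(x) = ⟨a,x⟩² + (1/4)‖x‖², f₂(x) = ⟨b,x⟩² + (1/4)‖x‖², f₃(x) = ⟨c,x⟩² + (1/4)‖x‖² with a = (−3,2,2), b = (2,−3,2), c = (2,2,−3). Fix t > 0 and η > 0, let x⁰ = (t,t,t), and let (x^k) be any sequence satisfying x^{k+1} = x^k − (η/3)·Σ_{i=1}^3 hᵢᵏ, where each hᵢᵏ is obtained from ∇fᵢ(x^k) by a Top-1 compressor: hᵢᵏ = (∇fᵢ(x^k))_j · e_j for some coordinate j maximizing |(∇fᵢ(x^k))_j| (e_j the j-th standard basis vector). Then x^k = (1 + 11η/6)^k · x⁰ for all k ≥ 0; in particular ‖x^k‖ → ∞ as k → ∞, so distributed compressed gradient descent with the Top-1 compressor diverges exponentially. (Along this trajectory, e.g. ∇f₁(x^k) = (s/2)(−11, 9, 9) when x^k = (s,s,s), so the maximizing coordinate is unique and the Top-1 outputs are (−11s/2)e₁, (−11s/2)e₂, (−11s/2)e₃ respectively.) -/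

import Mathlib

open scoped RealInnerProductSpace

lemma aux_grad (v x : EuclideanSpace ℝ (Fin 3)) :
    HasGradientAt (fun y => ⟪v, y⟫ ^ 2 + (1 / 4 : ℝ) * ‖y‖ ^ 2)
      ((2 * ⟪v, x⟫) • v + (1 / 2 : ℝ) • x) x := by
  rw [hasGradientAt_iff_hasFDerivAt]
  have h1 : HasFDerivAt (fun y : EuclideanSpace ℝ (Fin 3) => ⟪v, y⟫ * ⟪v, y⟫)
      (⟪v, x⟫ • (innerSL ℝ v) + ⟪v, x⟫ • (innerSL ℝ v)) x :=
    ((innerSL ℝ v).hasFDerivAt (x := x)).mul ((innerSL ℝ v).hasFDerivAt (x := x))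
  have h2 : HasFDerivAt (fun y : EuclideanSpace ℝ (Fin 3) => ⟪y, y⟫)
      ((fderivInnerCLM ℝ (x, x)).comp ((ContinuousLinearMap.id ℝ _).prod
        (ContinuousLinearMap.id ℝ _))) x :=
    (hasFDerivAt_id x).inner ℝ (hasFDerivAt_id x)
  have H : HasFDerivAt (fun y : EuclideanSpace ℝ (Fin 3) => ⟪v, y⟫ * ⟪v, y⟫ + (1/4 : ℝ) * ⟪y, y⟫) _ x :=
    h1.add (h2.const_mul (1 / 4 : ℝ))
  have hfun : (fun y : EuclideanSpace ℝ (Fin 3) => ⟪v, y⟫ * ⟪v, y⟫ + (1/4 : ℝ) * ⟪y, y⟫)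
      = fun y => ⟪v, y⟫ ^ 2 + (1 / 4 : ℝ) * ‖y‖ ^ 2 := by
    funext y
    rw [real_inner_self_eq_norm_sq]; ring
  rw [hfun] at H
  refine H.congr_fderiv ?_
  ext w
  simp [real_inner_smul_left, inner_add_left, fderivInnerCLM_apply, real_inner_comm x w]
  ring

/-- the Top-1 divergence counterexample (Example 1 of Beznosikov et al.
2020). In ℝ³, with `f₁(x) = ⟨a,x⟩² + ‖x‖²/4`, `f₂(x) = ⟨b,x⟩² + ‖x‖²/4`,
`f₃(x) = ⟨c,x⟩² + ‖x‖²/4`, `a = (−3,2,2)`, `b = (2,−3,2)`, `c = (2,2,−3)`,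
starting from `x⁰ = (t,t,t)`, `t > 0`, any sequence generated by
`x^{k+1} = x^k − (η/3) Σᵢ hᵢᵏ` with `hᵢᵏ` a Top-1 compression of `∇fᵢ(x^k)` satisfies
`x^k = (1 + 11η/6)^k x⁰`, and in particular `‖x^k‖ → ∞`. -/
theorem top1_dcgd_diverges
    (a b c : EuclideanSpace ℝ (Fin 3))
    (ha : a 0 = -3 ∧ a 1 = 2 ∧ a 2 = 2)
    (hb : b 0 = 2 ∧ b 1 = -3 ∧ b 2 = 2)
    (hc : c 0 = 2 ∧ c 1 = 2 ∧ c 2 = -3)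
    (F : Fin 3 → EuclideanSpace ℝ (Fin 3) → ℝ)
    (hF1 : ∀ y, F 0 y = ⟪a, y⟫ ^ 2 + (1 / 4) * ‖y‖ ^ 2)
    (hF2 : ∀ y, F 1 y = ⟪b, y⟫ ^ 2 + (1 / 4) * ‖y‖ ^ 2)
    (hF3 : ∀ y, F 2 y = ⟪c, y⟫ ^ 2 + (1 / 4) * ‖y‖ ^ 2)
    (t η : ℝ) (ht : 0 < t) (hη : 0 < η)
    (x : ℕ → EuclideanSpace ℝ (Fin 3))
    (hx0 : ∀ i : Fin 3, x 0 i = t)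
    (h : ℕ → Fin 3 → EuclideanSpace ℝ (Fin 3))
    -- each hᵢᵏ is a Top-1 compression of ∇fᵢ(x^k): it keeps a coordinate of
    -- maximal absolute value and zeroes out the rest
    (htop : ∀ k (i : Fin 3), ∃ j : Fin 3,
      (∀ j' : Fin 3, |gradient (F i) (x k) j'| ≤ |gradient (F i) (x k) j|) ∧
      h k i = EuclideanSpace.single j (gradient (F i) (x k) j))
    (hrec : ∀ k, x (k + 1) = x k - (η / 3) • ∑ i : Fin 3, h k i) :
    (∀ k, x k = (1 + 11 * η / 6) ^ k • x 0) ∧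
      Filter.Tendsto (fun k => ‖x k‖) Filter.atTop Filter.atTop := by
  obtain ⟨ha0, ha1, ha2⟩ := ha
  obtain ⟨hb0, hb1, hb2⟩ := hb
  obtain ⟨hc0, hc1, hc2⟩ := hc
  set r : ℝ := 1 + 11 * η / 6 with hr
  have hr1 : 1 < r := by simp only [hr]; linarith
  -- gradients of F i
  have hgrad : ∀ (i : Fin 3) (v : EuclideanSpace ℝ (Fin 3)),
      (∀ y, F i y = ⟪v, y⟫ ^ 2 + (1 / 4) * ‖y‖ ^ 2) →
      ∀ z, gradient (F i) z = (2 * ⟪v, z⟫) • v + (1 / 2 : ℝ) • z := by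
    intro i v hFi z
    have : F i = fun y => ⟪v, y⟫ ^ 2 + (1 / 4 : ℝ) * ‖y‖ ^ 2 := funext hFi
    rw [this]
    exact (aux_grad v z).gradient
  -- the main induction
  have key : ∀ k, x k = r ^ k • x 0 := by
    intro k
    induction k with
    | zero => simp
    | succ k ih =>
      set u : ℝ := r ^ k * t with hu
      have hupos : 0 < u := mul_pos (pow_pos (by linarith) k) ht
      have hxk : ∀ j : Fin 3, x k j = u := by
        intro j
        rw [ih]
        simp [hx0 j, hu, mul_comm]
      -- inner products
      have hinner : ∀ v : EuclideanSpace ℝ (Fin 3),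
          v 0 + v 1 + v 2 = 1 → ⟪v, x k⟫ = u := by
        intro v hv
        rw [show ⟪v, x k⟫ = ∑ j : Fin 3, v j * x k j by simp [PiLp.inner_apply, mul_comm], Fin.sum_univ_three,
          hxk 0, hxk 1, hxk 2]
        nlinarith [hv]
      -- gradient coordinates
      have hgc : ∀ (i : Fin 3) (v : EuclideanSpace ℝ (Fin 3)),
          (∀ y, F i y = ⟪v, y⟫ ^ 2 + (1 / 4) * ‖y‖ ^ 2) → v 0 + v 1 + v 2 = 1 →
          ∀ j : Fin 3, gradient (F i) (x k) j = 2 * u * v j + u / 2 := by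
        intro i v hFi hv j
        rw [hgrad i v hFi (x k)]
        have : ((2 * ⟪v, x k⟫) • v + (1 / 2 : ℝ) • x k) j
            = 2 * ⟪v, x k⟫ * v j + (1 / 2) * x k j := rfl
        rw [this, hinner v hv, hxk j]; ring
      have hsum_a : a 0 + a 1 + a 2 = 1 := by rw [ha0, ha1, ha2]; norm_num
      have hsum_b : b 0 + b 1 + b 2 = 1 := by rw [hb0, hb1, hb2]; norm_num
      have hsum_c : c 0 + c 1 + c 2 = 1 := by rw [hc0, hc1, hc2]; norm_num
      -- identify h k i
      have hid : ∀ (i j₀ : Fin 3) (v : EuclideanSpace ℝ (Fin 3)),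
          (∀ y, F i y = ⟪v, y⟫ ^ 2 + (1 / 4) * ‖y‖ ^ 2) → v 0 + v 1 + v 2 = 1 →
          v j₀ = -3 → (∀ j, j ≠ j₀ → v j = 2) →
          h k i = EuclideanSpace.single j₀ (-(11 / 2) * u) := by
        intro i j₀ v hFi hv hj₀ hoth
        obtain ⟨j, hmax, hhk⟩ := htop k i
        have hval : ∀ j' : Fin 3, gradient (F i) (x k) j'
            = if j' = j₀ then -(11 / 2) * u else 9 / 2 * u := by
          intro j'
          by_cases hj' : j' = j₀
          · subst hj'
            rw [hgc i v hFi hv j', hj₀, if_pos rfl]; ring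
          · rw [hgc i v hFi hv j', hoth j' hj', if_neg hj']; ring
        have hjj : j = j₀ := by
          by_contra hne
          have h1 := hmax j₀
          rw [hval j₀, hval j, if_pos rfl, if_neg hne] at h1
          rw [abs_of_nonpos (by nlinarith), abs_of_nonneg (by nlinarith)] at h1
          nlinarith
        rw [hhk, hjj, hval j₀, if_pos rfl]
      have h0 : h k 0 = EuclideanSpace.single 0 (-(11 / 2) * u) := by
        refine hid 0 0 a hF1 hsum_a ha0 ?_
        intro j hj
        fin_cases j
        · exact absurd rfl hj
        · exact ha1
        · exact ha2
      have h1 : h k 1 = EuclideanSpace.single 1 (-(11 / 2) * u) := by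
        refine hid 1 1 b hF2 hsum_b hb1 ?_
        intro j hj
        fin_cases j
        · exact hb0
        · exact absurd rfl hj
        · exact hb2
      have h2 : h k 2 = EuclideanSpace.single 2 (-(11 / 2) * u) := by
        refine hid 2 2 c hF3 hsum_c hc2 ?_
        intro j hj
        fin_cases j
        · exact hc0
        · exact hc1
        · exact absurd rfl hj
      -- the recursion
      have hstep : x (k + 1) = r • x k := by
        rw [hrec k]
        ext j
        have hsumj : (∑ i : Fin 3, h k i) j = -(11 / 2) * u := by
          rw [Fin.sum_univ_three, h0, h1, h2]
          fin_cases j <;>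
            simp [EuclideanSpace.single_apply, PiLp.add_apply]
        have : (x k - (η / 3) • ∑ i : Fin 3, h k i) j
            = x k j - (η / 3) * (∑ i : Fin 3, h k i) j := rfl
        rw [this, hsumj, hxk j]
        have hR : (r • x k) j = r * x k j := rfl
        rw [hR, hxk j]; ring
      rw [hstep, ih, smul_smul, ← pow_succ']
  refine ⟨key, ?_⟩
  have hnorm : ∀ k, ‖x k‖ = r ^ k * ‖x 0‖ := by
    intro k
    rw [key k, norm_smul, Real.norm_eq_abs, abs_of_pos (pow_pos (by linarith) k)]
  have hx0pos : 0 < ‖x 0‖ := by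
    refine norm_pos_iff.2 fun hz => ?_
    have := hx0 0
    rw [hz] at this
    simp at this
    exact absurd this.symm (ne_of_gt ht)
  have := (tendsto_pow_atTop_atTop_of_one_lt hr1).atTop_mul_const hx0pos
  refine this.congr fun k => (hnorm k).symm
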